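/- Let φ₀ : ℝ^n → ℝ and Φ : ℝ^n → ℝ^{m+1} be twice continuously differentiable, Γ = {x : Φ(x) ∈ Q}, and let x̄ ∈ Γ with Φ(x̄) = 0. Suppose λ̄ ∈ −Q satisfies ∇Φ(x̄)*λ̄ = −∇φ₀(x̄), and assume the second-order sufficient condition: for every u ≠ 0 with ∇Φ(x̄)u ∈ Q and ⟨∇Φ(x̄)u, λ̄⟩ = 0 one has ⟨∇²φ₀(x̄)u,u⟩ + ⟨λ̄, D²Φ(x̄)[u,u]⟩ > 0. Then x̄ is a strict local minimizer of φ₀ on Γ: there is r > 0 such that φ₀(x) > φ₀(x̄) for every x ∈ Γ with 0 < ‖x − x̄‖ ≤ r. -/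

import Mathlib

open scoped RealInnerProductSpace Pointwise
open Filter Topology Metric Set Classical

noncomputable section

abbrev Em (m : ℕ) := WithLp 2 (ℝ × EuclideanSpace ℝ (Fin m))

namespace SOC

def mk2 {α β : Type*} (a : α) (b : β) : WithLp 2 (α × β) := (WithLp.equiv 2 (α × β)).symm (a, b)

def Q (m : ℕ) : Set (Em m) := {s | ‖s.ofLp.2‖ ≤ s.ofLp.1}

variable {H : Type*} [NormedAddCommGroup H] [InnerProductSpace ℝ H]

def normalCone (C : Set H) (x : H) : Set H :=
  {y | x ∈ C ∧ ∀ z ∈ C, ⟪y, z - x⟫ ≤ 0}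

def tangentCone (Ω : Set H) (z : H) : Set H :=
  {w | ∃ t : ℕ → ℝ, ∃ wk : ℕ → H, (∀ k, 0 < t k) ∧ Tendsto t atTop (𝓝 0) ∧
    Tendsto wk atTop (𝓝 w) ∧ ∀ k, z + t k • wk k ∈ Ω}

def regularNormalCone (Ω : Set H) (z : H) : Set H :=
  {v | z ∈ Ω ∧ ∀ ε > 0, ∀ᶠ w in 𝓝[Ω \ {z}] z, ⟪v, w - z⟫ ≤ ε * ‖w - z‖}

def limitingNormalCone (Ω : Set H) (z : H) : Set H :=
  {v | ∃ zk : ℕ → H, ∃ vk : ℕ → H, (∀ k, vk k ∈ regularNormalCone Ω (zk k)) ∧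
    Tendsto zk atTop (𝓝 z) ∧ Tendsto vk atTop (𝓝 v)}

variable {n m : ℕ}

/-- The constraint set `Γ = {x | Φ(x) ∈ Q}`. -/
def Gamma (Φ : EuclideanSpace ℝ (Fin n) → Em m) : Set (EuclideanSpace ℝ (Fin n)) :=
  {x | Φ x ∈ Q m}

/-- Metric subregularity constraint qualification with modulus `κ`. -/
def MSCQmod (Φ : EuclideanSpace ℝ (Fin n) → Em m) (xb : EuclideanSpace ℝ (Fin n)) (κ : ℝ) : Prop :=
  ∃ U ∈ 𝓝 xb, ∀ x ∈ U, infDist x (Gamma Φ) ≤ κ * infDist (Φ x) (Q m)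

def MSCQ (Φ : EuclideanSpace ℝ (Fin n) → Em m) (xb : EuclideanSpace ℝ (Fin n)) : Prop :=
  ∃ κ > 0, MSCQmod Φ xb κ

/-- Lagrange multiplier set `Λ(x,x*)`. -/
def Lambda (Φ : EuclideanSpace ℝ (Fin n) → Em m) (x xs : EuclideanSpace ℝ (Fin n)) : Set (Em m) :=
  {lam | lam ∈ normalCone (Q m) (Φ x) ∧ ContinuousLinearMap.adjoint (fderiv ℝ Φ x) lam = xs}

/-- Critical cone `K(x,x*) = T_Γ(x) ∩ {x*}^⊥`. -/
def Kcone (Φ : EuclideanSpace ℝ (Fin n) → Em m) (x xs : EuclideanSpace ℝ (Fin n)) :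
    Set (EuclideanSpace ℝ (Fin n)) :=
  tangentCone (Gamma Φ) x ∩ {v | ⟪xs, v⟫ = 0}

/-- `x ↦ Φ̂(x) = (−Φ₀(x), Φ_r(x))`. -/
def hatFun (Φ : EuclideanSpace ℝ (Fin n) → Em m) (x : EuclideanSpace ℝ (Fin n)) : Em m :=
  mk2 (-(Φ x).ofLp.1) (Φ x).ofLp.2

/-- Hessian of `x ↦ ⟨λ, Φ(x)⟩` at `x`, as a linear map (derivative of the gradient). -/
def hessLam (Φ : EuclideanSpace ℝ (Fin n) → Em m) (x : EuclideanSpace ℝ (Fin n)) (lam : Em m) :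
    EuclideanSpace ℝ (Fin n) →L[ℝ] EuclideanSpace ℝ (Fin n) :=
  fderiv ℝ (fun y => ContinuousLinearMap.adjoint (fderiv ℝ Φ y) lam) x

/-- The curvature term `H(x;λ)`. -/

def Hmap (Φ : EuclideanSpace ℝ (Fin n) → Em m) (x : EuclideanSpace ℝ (Fin n)) (lam : Em m) :
    EuclideanSpace ℝ (Fin n) →L[ℝ] EuclideanSpace ℝ (Fin n) :=
  if Φ x ∈ frontier (Q m) \ {0} then
    (-(lam.ofLp.1 / (Φ x).ofLp.1)) •
      ((ContinuousLinearMap.adjoint (fderiv ℝ (hatFun Φ) x)).comp (fderiv ℝ Φ x))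
  else 0

/-- `∇²⟨λ,Φ⟩(x) + H(x;λ)`. -/
def Gmap (Φ : EuclideanSpace ℝ (Fin n) → Em m) (x : EuclideanSpace ℝ (Fin n)) (lam : Em m) :
    EuclideanSpace ℝ (Fin n) →L[ℝ] EuclideanSpace ℝ (Fin n) :=
  hessLam Φ x lam + Hmap Φ x lam

/-- `Λ(x,x*;v)`: minimizers of `λ ↦ −⟨v, (∇²⟨λ,Φ⟩(x)+H(x;λ))v⟩` over `Λ(x,x*)`. -/
def LambdaV (Φ : EuclideanSpace ℝ (Fin n) → Em m) (x xs v : EuclideanSpace ℝ (Fin n)) :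
    Set (Em m) :=
  {lam ∈ Lambda Φ x xs | ∀ mu ∈ Lambda Φ x xs,
    -⟪v, Gmap Φ x lam v⟫ ≤ -⟪v, Gmap Φ x mu v⟫}

/-- Graph of the limiting normal cone mapping `N_Γ`, inside `ℝ^n × ℝ^n` with the ℓ² norm. -/
def gphNGamma (Φ : EuclideanSpace ℝ (Fin n) → Em m) :
    Set (WithLp 2 (EuclideanSpace ℝ (Fin n) × EuclideanSpace ℝ (Fin n))) :=
  {p | p.ofLp.2 ∈ limitingNormalCone (Gamma Φ) p.ofLp.1}

/-- Second derivative `D²Φ(x)[v,v]`. -/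
def D2 (Φ : EuclideanSpace ℝ (Fin n) → Em m) (x v : EuclideanSpace ℝ (Fin n)) : Em m :=
  fderiv ℝ (fderiv ℝ Φ) x v v

end SOC


section AuxProof

open Set

private lemma taylor2aux {g : ℝ → ℝ} (hg : ContDiff ℝ 2 g) :
    ∃ θ ∈ Set.Ioo (0:ℝ) 1, g 1 - g 0 - deriv g 0 = deriv (deriv g) θ / 2 := by
  have hg1 : ContDiff ℝ (1+1) g := by norm_num; exact hg
  have hgd : Differentiable ℝ g := hg.differentiable (by norm_num)
  have hg' : ContDiff ℝ 1 (deriv g) := (contDiff_succ_iff_deriv.mp hg1).2.2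
  have hg'd : Differentiable ℝ (deriv g) := hg'.differentiable one_ne_zero
  set C : ℝ := g 1 - g 0 - deriv g 0 with hC
  set h' : ℝ → ℝ := fun t => deriv g t - deriv g 0 - 2 * (t * C) with hh'
  have hder : ∀ t, HasDerivAt (fun t => g t - g 0 - t * deriv g 0 - t ^ 2 * C) (h' t) t := by
    intro t
    have h1 : HasDerivAt g (deriv g t) t := (hgd t).hasDerivAt
    have h2 : HasDerivAt (fun t : ℝ => t * deriv g 0) (deriv g 0) t := by
      simpa using (hasDerivAt_id t).mul_const (deriv g 0)
    have h3 : HasDerivAt (fun t : ℝ => t ^ 2 * C) (2 * t * C) t := by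
      simpa using (hasDerivAt_pow 2 t).mul_const C
    have := ((h1.sub_const (g 0)).sub h2).sub h3
    refine this.congr_deriv ?_
    show _ = deriv g t - deriv g 0 - 2 * (t * C); ring
  have hcont : ContinuousOn (fun t => g t - g 0 - t * deriv g 0 - t ^ 2 * C) (Icc 0 1) :=
    (((hgd.continuous.sub continuous_const).sub (continuous_id.mul continuous_const)).sub
      ((continuous_pow 2).mul continuous_const)).continuousOn
  have heq : (fun t => g t - g 0 - t * deriv g 0 - t ^ 2 * C) 0
      = (fun t => g t - g 0 - t * deriv g 0 - t ^ 2 * C) 1 := by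
    simp only; rw [hC]; ring
  obtain ⟨a, ha, hda⟩ := exists_deriv_eq_zero (by norm_num : (0:ℝ) < 1) hcont heq
  have hda' : h' a = 0 := by rw [← (hder a).deriv]; exact hda
  have h'cont : ContinuousOn h' (Icc 0 a) :=
    ((hg'.continuous.sub continuous_const).sub
      (continuous_const.mul (continuous_id.mul continuous_const))).continuousOn
  have h'eq : h' 0 = h' a := by rw [hda']; simp [hh']
  obtain ⟨θ, hθ, hdθ⟩ := exists_deriv_eq_zero ha.1 h'cont h'eq
  have hd2 : HasDerivAt h' (deriv (deriv g) θ - 2 * C) θ := by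
    have h1 : HasDerivAt (deriv g) (deriv (deriv g) θ) θ := (hg'd θ).hasDerivAt
    have h2 : HasDerivAt (fun t : ℝ => 2 * (t * C)) (2 * C) θ := by
      simpa [mul_comm, mul_assoc] using ((hasDerivAt_id θ).mul_const C).const_mul 2
    exact (h1.sub_const (deriv g 0)).sub h2
  have : deriv (deriv g) θ - 2 * C = 0 := by rw [← hd2.deriv]; exact hdθ
  exact ⟨θ, ⟨hθ.1, lt_trans hθ.2 ha.2⟩, by linarith⟩

private lemma inner_Em_eq {m : ℕ} (x y : Em m) : ⟪x, y⟫ = x.ofLp.1 * y.ofLp.1 + ⟪x.ofLp.2, y.ofLp.2⟫ := by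
  rw [WithLp.prod_inner_apply]; simp [RCLike.inner_apply]; ring

private lemma Q_isClosed (m : ℕ) : IsClosed (SOC.Q m) := by
  have h1 : Continuous (fun s : Em m => s.ofLp.1) :=
    continuous_fst.comp (WithLp.prod_continuous_ofLp ..)
  have h2 : Continuous (fun s : Em m => s.ofLp.2) :=
    continuous_snd.comp (WithLp.prod_continuous_ofLp ..)
  exact isClosed_le (continuous_norm.comp h2) h1

private lemma Q_smul_mem {m : ℕ} {s : Em m} (hs : s ∈ SOC.Q m) {c : ℝ} (hc : 0 ≤ c) :
    c • s ∈ SOC.Q m := by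
  have h1 : (c • s).ofLp.1 = c * s.ofLp.1 := rfl
  have h2 : (c • s).ofLp.2 = c • s.ofLp.2 := rfl
  simp only [SOC.Q, Set.mem_setOf_eq] at hs ⊢
  rw [h1, h2, norm_smul, Real.norm_eq_abs, abs_of_nonneg hc]
  exact mul_le_mul_of_nonneg_left hs hc

private lemma Q_dual_nonpos {m : ℕ} {lam s : Em m} (hlam : lam ∈ -(SOC.Q m))
    (hs : s ∈ SOC.Q m) : ⟪lam, s⟫ ≤ 0 := by
  rw [Set.mem_neg] at hlam
  simp only [SOC.Q, Set.mem_setOf_eq] at hlam hs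
  have hn1 : (-lam).ofLp.1 = -lam.ofLp.1 := rfl
  have hn2 : (-lam).ofLp.2 = -lam.ofLp.2 := rfl
  rw [hn1, hn2, norm_neg] at hlam
  have hinner : ⟪lam.ofLp.2, s.ofLp.2⟫ ≤ ‖lam.ofLp.2‖ * ‖s.ofLp.2‖ := real_inner_le_norm _ _
  have hs1 : (0:ℝ) ≤ s.ofLp.1 := le_trans (norm_nonneg _) hs
  have h2 : ‖lam.ofLp.2‖ * ‖s.ofLp.2‖ ≤ (-lam.ofLp.1) * s.ofLp.1 :=
    mul_le_mul hlam hs (norm_nonneg _) (le_trans (norm_nonneg _) hlam)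
  rw [inner_Em_eq]
  nlinarith

end AuxProof

set_option maxHeartbeats 2000000 in
open SOC in
/-- Proposition 4.9: the second-order sufficient condition implies that `x̄` is a strict
local minimizer of `φ₀` over `Γ = {x : Φ(x) ∈ Q}` when `Φ(x̄) = 0`. -/
theorem second_order_sufficient_condition_strict_local_min
    {n m : ℕ} (φ₀ : EuclideanSpace ℝ (Fin n) → ℝ) (hφ : ContDiff ℝ 2 φ₀)
    (Φ : EuclideanSpace ℝ (Fin n) → Em m) (hΦ : ContDiff ℝ 2 Φ)
    (xb : EuclideanSpace ℝ (Fin n)) (hxb : xb ∈ Gamma Φ) (hxb0 : Φ xb = 0)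
    (lamb : Em m) (hlam1 : lamb ∈ -(Q m))
    (hlam2 : ContinuousLinearMap.adjoint (fderiv ℝ Φ xb) lamb = -gradient φ₀ xb)
    (hsosc : ∀ u : EuclideanSpace ℝ (Fin n), u ≠ 0 →
      (fderiv ℝ Φ xb) u ∈ Q m → ⟪(fderiv ℝ Φ xb) u, lamb⟫ = 0 →
      0 < (fderiv ℝ (fderiv ℝ φ₀) xb) u u + ⟪lamb, D2 Φ xb u⟫) :
    ∃ r > (0 : ℝ), ∀ x ∈ Gamma Φ, 0 < ‖x - xb‖ → ‖x - xb‖ ≤ r → φ₀ xb < φ₀ x := by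
  classical
  by_contra hcon
  push_neg at hcon
  -- extract a sequence violating strict minimality
  have hseq : ∀ k : ℕ, ∃ x ∈ Gamma Φ,
      0 < ‖x - xb‖ ∧ ‖x - xb‖ ≤ 1 / (k + 1) ∧ φ₀ x ≤ φ₀ xb := by
    intro k
    obtain ⟨x, hx1, hx2, hx3, hx4⟩ := hcon (1 / (k + 1)) (by positivity)
    exact ⟨x, hx1, hx2, hx3, hx4⟩
  choose z hzΓ hz1 hz2 hz3 using hseq
  set u : ℕ → EuclideanSpace ℝ (Fin n) := fun k => ‖z k - xb‖⁻¹ • (z k - xb) with hu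
  have humem : ∀ k, u k ∈ Metric.sphere (0 : EuclideanSpace ℝ (Fin n)) 1 := by
    intro k
    rw [mem_sphere_zero_iff_norm, hu, norm_smul, norm_inv, norm_norm]
    exact inv_mul_cancel₀ (hz1 k).ne'
  obtain ⟨ub, hubs, ψ, hψ, hconv⟩ :=
    (isCompact_sphere (0 : EuclideanSpace ℝ (Fin n)) 1).tendsto_subseq humem
  have hub1 : ‖ub‖ = 1 := mem_sphere_zero_iff_norm.mp hubs
  have hubne : ub ≠ 0 := by intro h; rw [h, norm_zero] at hub1; norm_num at hub1
  set y : ℕ → EuclideanSpace ℝ (Fin n) := fun k => z (ψ k) with hy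
  set d : ℕ → EuclideanSpace ℝ (Fin n) := fun k => y k - xb with hd
  set t : ℕ → ℝ := fun k => ‖d k‖ with htdef
  set v : ℕ → EuclideanSpace ℝ (Fin n) := fun k => u (ψ k) with hv
  have ht : ∀ k, 0 < t k := fun k => hz1 (ψ k)
  have hvdef : ∀ k, v k = (t k)⁻¹ • d k := fun k => rfl
  have hdv : ∀ k, d k = t k • v k := by
    intro k
    rw [hvdef, smul_smul, mul_inv_cancel₀ (ht k).ne', one_smul]
  have hvlim : Tendsto v atTop (𝓝 ub) := hconv
  -- t → 0 and y → xb
  have ht0 : Tendsto t atTop (𝓝 0) := by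
    apply squeeze_zero (fun k => (ht k).le) (fun k => ?_)
      (tendsto_one_div_add_atTop_nhds_zero_nat)
    calc t k ≤ 1 / (ψ k + 1) := hz2 (ψ k)
      _ ≤ 1 / (k + 1) := by
          apply one_div_le_one_div_of_le (by positivity)
          have h : (k : ℝ) ≤ (ψ k : ℝ) := Nat.cast_le.mpr hψ.le_apply
          linarith
  have hylim : Tendsto y atTop (𝓝 xb) := by
    rw [tendsto_iff_dist_tendsto_zero]
    simpa [dist_eq_norm] using ht0
  have hyΓ : ∀ k, Φ (y k) ∈ Q m := fun k => hzΓ (ψ k)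
  have hyle : ∀ k, φ₀ (y k) ≤ φ₀ xb := fun k => hz3 (ψ k)
  -- derivative notation
  set A := fderiv ℝ Φ xb with hA
  have hΦd : Differentiable ℝ Φ := hΦ.differentiable (by norm_num)
  have hφd : Differentiable ℝ φ₀ := hφ.differentiable (by norm_num)
  -- helper : scaled little-o goes to zero
  have hsmallaux : ∀ {F : Type} [inst : NormedAddCommGroup F] [inst2 : NormedSpace ℝ F]
      (e : ℕ → F), ((fun k => e k) =o[atTop] fun k => d k) →
      Tendsto (fun k => (t k)⁻¹ • e k) atTop (𝓝 0) := by
    intro F _ _ e he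
    rw [NormedAddCommGroup.tendsto_nhds_zero]
    intro ε hε
    filter_upwards [he.def (half_pos hε)] with k hk
    rw [norm_smul, norm_inv, Real.norm_eq_abs, abs_of_pos (ht k)]
    have h2 : (t k)⁻¹ * ‖e k‖ ≤ (t k)⁻¹ * (ε / 2 * t k) := by
      apply mul_le_mul_of_nonneg_left _ (inv_nonneg.mpr (ht k).le)
      exact hk
    calc (t k)⁻¹ * ‖e k‖ ≤ (t k)⁻¹ * (ε / 2 * t k) := h2
      _ = ε / 2 := by
          rw [mul_comm (ε / 2) (t k), ← mul_assoc, inv_mul_cancel₀ (ht k).ne', one_mul]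
      _ < ε := half_lt_self hε
  -- Step A : A ub ∈ Q
  have hΦlittle : (fun k => Φ (y k) - A (d k)) =o[atTop] fun k => d k := by
    have h0 := ((hΦd xb).hasFDerivAt.isLittleO).comp_tendsto hylim
    simp only [Function.comp_def, hxb0, sub_zero] at h0
    exact h0
  have hE1 : Tendsto (fun k => (t k)⁻¹ • (Φ (y k) - A (d k))) atTop (𝓝 0) :=
    hsmallaux _ hΦlittle
  have hQlim : Tendsto (fun k => (t k)⁻¹ • Φ (y k)) atTop (𝓝 (A ub)) := by
    have heq : ∀ k, (t k)⁻¹ • Φ (y k) = (t k)⁻¹ • (Φ (y k) - A (d k)) + A (v k) := by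
      intro k
      rw [hvdef, map_smul, smul_sub]
      abel
    have h2 : Tendsto (fun k => A (v k)) atTop (𝓝 (A ub)) :=
      (A.continuous.tendsto ub).comp hvlim
    have := hE1.add h2
    rw [zero_add] at this
    exact this.congr (fun k => (heq k).symm)
  have hAuQ : A ub ∈ Q m := by
    refine (Q_isClosed m).mem_of_tendsto hQlim (Filter.Eventually.of_forall fun k => ?_)
    exact Q_smul_mem (hyΓ k) (inv_nonneg.mpr (ht k).le)
  -- Step B : fderiv φ₀ xb ub ≤ 0
  set f' := fderiv ℝ φ₀ xb with hf'
  have hφlittle : (fun k => φ₀ (y k) - φ₀ xb - f' (d k)) =o[atTop] fun k => d k :=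
    ((hφd xb).hasFDerivAt.isLittleO).comp_tendsto hylim
  have hE2 : Tendsto (fun k => (t k)⁻¹ • (φ₀ (y k) - φ₀ xb - f' (d k))) atTop (𝓝 0) :=
    hsmallaux _ hφlittle
  have hE2n : Tendsto (fun k => ‖(t k)⁻¹ • (φ₀ (y k) - φ₀ xb - f' (d k))‖) atTop (𝓝 0) := by
    simpa using hE2.norm
  have hf'le : ∀ k, f' (v k) ≤ ‖(t k)⁻¹ • (φ₀ (y k) - φ₀ xb - f' (d k))‖ := by
    intro k
    have h1 : f' (v k) = (t k)⁻¹ * (φ₀ (y k) - φ₀ xb)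
        - (t k)⁻¹ * (φ₀ (y k) - φ₀ xb - f' (d k)) := by
      rw [hvdef, map_smul]
      simp only [smul_eq_mul]
      ring
    have h2 : (t k)⁻¹ * (φ₀ (y k) - φ₀ xb) ≤ 0 :=
      mul_nonpos_of_nonneg_of_nonpos (inv_nonneg.mpr (ht k).le) (by linarith [hyle k])
    have hsm : (t k)⁻¹ • (φ₀ (y k) - φ₀ xb - f' (d k))
        = (t k)⁻¹ * (φ₀ (y k) - φ₀ xb - f' (d k)) := rfl
    have h3 : -((t k)⁻¹ * (φ₀ (y k) - φ₀ xb - f' (d k)))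
        ≤ ‖(t k)⁻¹ • (φ₀ (y k) - φ₀ xb - f' (d k))‖ := by
      rw [hsm, Real.norm_eq_abs]
      exact neg_le_abs _
    rw [h1]
    linarith
  have hf'lim : Tendsto (fun k => f' (v k)) atTop (𝓝 (f' ub)) :=
    (f'.continuous.tendsto ub).comp hvlim
  have hf'ub : f' ub ≤ 0 :=
    le_of_tendsto_of_tendsto' hf'lim hE2n hf'le
  -- Step C : complementarity
  have hgradinner : ∀ w : EuclideanSpace ℝ (Fin n), ⟪gradient φ₀ xb, w⟫ = f' w := by
    intro w
    rw [gradient]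
    exact InnerProductSpace.toDual_symm_apply
  have hinner_eq : ⟪lamb, A ub⟫ = -(f' ub) := by
    rw [← ContinuousLinearMap.adjoint_inner_left A ub lamb, hlam2, inner_neg_left,
      hgradinner]
  have hinner_le : ⟪lamb, A ub⟫ ≤ 0 := Q_dual_nonpos hlam1 hAuQ
  have hcrit : ⟪A ub, lamb⟫ = 0 := by
    rw [real_inner_comm]
    linarith [hinner_eq, hinner_le, hf'ub]
  -- Step D : Lagrangian
  set L : EuclideanSpace ℝ (Fin n) → ℝ := fun x => φ₀ x + ⟪lamb, Φ x⟫ with hLdef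
  have hLinner : (fun x => (⟪lamb, Φ x⟫ : ℝ)) = fun x => innerSL ℝ lamb (Φ x) := rfl
  have hL : ContDiff ℝ 2 L := by
    apply hφ.add
    rw [hLinner]
    exact (innerSL ℝ lamb).contDiff.comp hΦ
  have hLd : Differentiable ℝ L := hL.differentiable (by norm_num)
  have hfderivL : ∀ x, fderiv ℝ L x
      = fderiv ℝ φ₀ x + (innerSL ℝ lamb).comp (fderiv ℝ Φ x) := by
    intro x
    have h1 : HasFDerivAt φ₀ (fderiv ℝ φ₀ x) x := (hφd x).hasFDerivAt
    have h2 : HasFDerivAt (fun x => innerSL ℝ lamb (Φ x))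
        ((innerSL ℝ lamb).comp (fderiv ℝ Φ x)) x :=
      (innerSL ℝ lamb).hasFDerivAt.comp x (hΦd x).hasFDerivAt
    exact (h1.add h2).fderiv
  have hL0 : fderiv ℝ L xb = 0 := by
    rw [hfderivL]
    ext w
    have h1 : ⟪lamb, A w⟫ = ⟪ContinuousLinearMap.adjoint A lamb, w⟫ :=
      (ContinuousLinearMap.adjoint_inner_left A w lamb).symm
    rw [hlam2, inner_neg_left, hgradinner] at h1
    simp only [ContinuousLinearMap.add_apply, ContinuousLinearMap.comp_apply,
      innerSL_apply_apply, ContinuousLinearMap.zero_apply, ← hA]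
    rw [h1]
    ring
  have hLxb : L xb = φ₀ xb := by
    simp only [hLdef, hxb0, inner_zero_right, add_zero]
  have hLle : ∀ k, L (y k) ≤ L xb := by
    intro k
    have h1 : ⟪lamb, Φ (y k)⟫ ≤ 0 := Q_dual_nonpos hlam1 (hyΓ k)
    rw [hLxb]
    have := hyle k
    simp only [hLdef]
    linarith
  -- Step E : second derivative of L
  have hL2 : ContDiff ℝ (1 + 1) L := by norm_num; exact hL
  have hL1 : ContDiff ℝ 1 (fderiv ℝ L) := (contDiff_succ_iff_fderiv.mp hL2).2.2
  have hBd : Differentiable ℝ (fderiv ℝ L) := hL1.differentiable one_ne_zero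
  set B := fderiv ℝ (fderiv ℝ L) with hB
  have hBc : Continuous B := hL1.continuous_fderiv one_ne_zero
  -- Taylor expansion along segments
  have hquad : ∀ k, ∃ ξ : EuclideanSpace ℝ (Fin n),
      ‖ξ - xb‖ ≤ t k ∧ (B ξ) (v k) (v k) ≤ 0 := by
    intro k
    have hline : ∀ s : ℝ, HasDerivAt (fun s : ℝ => xb + s • d k) (d k) s := by
      intro s
      simpa using ((hasDerivAt_id s).smul_const (d k)).const_add xb
    set g : ℝ → ℝ := fun s => L (xb + s • d k) with hg
    have hgC : ContDiff ℝ 2 g :=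
      hL.comp (contDiff_const.add (contDiff_id.smul contDiff_const))
    have hgd1 : ∀ s, HasDerivAt g (fderiv ℝ L (xb + s • d k) (d k)) s := fun s =>
      (hLd _).hasFDerivAt.comp_hasDerivAt s (hline s)
    have hderiv_g : deriv g = fun s => fderiv ℝ L (xb + s • d k) (d k) :=
      funext fun s => (hgd1 s).deriv
    have hgd2 : ∀ s, HasDerivAt (deriv g) ((B (xb + s • d k)) (d k) (d k)) s := by
      intro s
      rw [hderiv_g]
      have h1 : HasDerivAt (fun s : ℝ => fderiv ℝ L (xb + s • d k))
          (B (xb + s • d k) (d k)) s :=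
        (hBd _).hasFDerivAt.comp_hasDerivAt s (hline s)
      have := (ContinuousLinearMap.apply ℝ ℝ (d k)).hasFDerivAt.comp_hasDerivAt s h1
      exact this
    obtain ⟨θ, hθ, htay⟩ := taylor2aux hgC
    have hxd : xb + (1:ℝ) • d k = y k := by
      rw [one_smul]
      show xb + (y k - xb) = y k
      abel
    have hg1 : g 1 = L (y k) := by
      show L (xb + (1:ℝ) • d k) = L (y k)
      rw [hxd]
    have hg0 : g 0 = L xb := by simp [hg]
    have hdg0 : deriv g 0 = 0 := by
      rw [hderiv_g]
      simp only [zero_smul, add_zero, hL0, ContinuousLinearMap.zero_apply]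
    have hdd : deriv (deriv g) θ = (B (xb + θ • d k)) (d k) (d k) := (hgd2 θ).deriv
    rw [hg1, hg0, hdg0, hdd, sub_zero] at htay
    refine ⟨xb + θ • d k, ?_, ?_⟩
    · rw [add_sub_cancel_left, norm_smul, Real.norm_eq_abs,
        abs_of_pos hθ.1]
      calc θ * ‖d k‖ ≤ 1 * ‖d k‖ :=
        mul_le_mul_of_nonneg_right hθ.2.le (norm_nonneg _)
        _ = t k := by rw [one_mul]
    · have h2 : L (y k) - L xb ≤ 0 := sub_nonpos.mpr (hLle k)
      rw [htay] at h2
      have hBdd : (B (xb + θ • d k)) (d k) (d k) ≤ 0 := by linarith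
      set w := xb + θ • d k with hw
      have hexp : (B w) (d k) (d k)
          = t k * (t k * ((B w) (v k) (v k))) := by
        conv_lhs => rw [hdv k]
        simp only [map_smul, ContinuousLinearMap.smul_apply, ContinuousLinearMap.coe_smul',
          Pi.smul_apply, smul_eq_mul]
      rw [hexp] at hBdd
      have htt : 0 < t k * t k := mul_pos (ht k) (ht k)
      have hre : t k * (t k * ((B w) (v k) (v k)))
          = (t k * t k) * ((B w) (v k) (v k)) := by ring
      rw [hre] at hBdd
      exact le_of_mul_le_mul_left (by linarith) htt
  choose ξ hξ1 hξ2 using hquad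
  have hξlim : Tendsto ξ atTop (𝓝 xb) := by
    rw [tendsto_iff_dist_tendsto_zero]
    apply squeeze_zero (fun k => dist_nonneg) (fun k => ?_) ht0
    rw [dist_eq_norm]
    exact hξ1 k
  -- limit of the quadratic forms
  have hstep1 : Tendsto (fun k => B (ξ k)) atTop (𝓝 (B xb)) :=
    (hBc.tendsto xb).comp hξlim
  have hstep2 : Tendsto (fun k => (B (ξ k)) (v k)) atTop (𝓝 (B xb ub)) := by
    have := (isBoundedBilinearMap_apply.continuous.tendsto (B xb, ub)).comp
      (hstep1.prodMk_nhds hvlim)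
    exact this
  have hstep3 : Tendsto (fun k => (B (ξ k)) (v k) (v k)) atTop (𝓝 (B xb ub ub)) := by
    have := (isBoundedBilinearMap_apply.continuous.tendsto (B xb ub, ub)).comp
      (hstep2.prodMk_nhds hvlim)
    exact this
  have hfinal : B xb ub ub ≤ 0 :=
    le_of_tendsto hstep3 (Filter.Eventually.of_forall hξ2)
  -- identify B xb ub ub with the SOSC quadratic form
  have hΦ2 : ContDiff ℝ (1 + 1) Φ := by norm_num; exact hΦ
  have hΦ1 : ContDiff ℝ 1 (fderiv ℝ Φ) := (contDiff_succ_iff_fderiv.mp hΦ2).2.2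
  have hφ2 : ContDiff ℝ (1 + 1) φ₀ := by norm_num; exact hφ
  have hφ1 : ContDiff ℝ 1 (fderiv ℝ φ₀) := (contDiff_succ_iff_fderiv.mp hφ2).2.2
  set C2 := ContinuousLinearMap.compL ℝ (EuclideanSpace ℝ (Fin n)) (Em m) ℝ
    (innerSL ℝ lamb) with hC2
  have hfunext : fderiv ℝ L = fun x => fderiv ℝ φ₀ x + C2 (fderiv ℝ Φ x) :=
    funext fun x => by rw [hfderivL x]; rfl
  have h1' : HasFDerivAt (fderiv ℝ φ₀) (fderiv ℝ (fderiv ℝ φ₀) xb) xb :=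
    (hφ1.differentiable one_ne_zero xb).hasFDerivAt
  have h2' : HasFDerivAt (fun x => C2 (fderiv ℝ Φ x))
      (C2.comp (fderiv ℝ (fderiv ℝ Φ) xb)) xb :=
    C2.hasFDerivAt.comp xb (hΦ1.differentiable one_ne_zero xb).hasFDerivAt
  have hBxb : B xb = fderiv ℝ (fderiv ℝ φ₀) xb + C2.comp (fderiv ℝ (fderiv ℝ Φ) xb) := by
    rw [hB, hfunext]
    exact (h1'.add h2').fderiv
  have hBval : B xb ub ub = (fderiv ℝ (fderiv ℝ φ₀) xb) ub ub + ⟪lamb, D2 Φ xb ub⟫ := by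
    rw [hBxb]
    simp only [ContinuousLinearMap.add_apply, ContinuousLinearMap.comp_apply,
      ContinuousLinearMap.compL_apply, innerSL_apply_apply, D2]
    rfl
  have hpos := hsosc ub hubne hAuQ hcrit
  rw [hBval] at hfinal
  linarith
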